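/- Let N ≥ 2, let K, G be real n_Γ×n_Γ matrices, D a real n_Γ×N matrix, F a real N×N matrix, and 1_N ∈ ℝ^N the all-ones vector. Define 𝒦 = [[K, D, 0], [Dᵀ, F, 1_N], [0ᵀ, 1_Nᵀ, 0]] and 𝒢 = [[G, D, 0], [Dᵀ, F, 1_N], [0ᵀ, 1_Nᵀ, 0]]. Let Z ∈ ℝ^{N×(N−1)} be a matrix whose columns form a basis of {x ∈ ℝ^N : 1_Nᵀx = 0}, assume ZᵀFZ is invertible, and set Q = DZ(ZᵀFZ)^{−1}(DZ)ᵀ. If λ ≠ 1, x ∈ ℝ^{n_Γ} is nonzero, and (K − Q)x = λ(G − Q)x, then there exist unique z₂ ∈ ℝ^N and z₃ ∈ ℝ such that z = (x, z₂, z₃) satisfies 𝒦z = λ𝒢z; explicitly, z₂ = −Z(ZᵀFZ)^{−1}ZᵀDᵀx, and z₃ is the unique scalar with z₃·1_N = −(Dᵀx + Fz₂). -/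

import Mathlib

open Matrix

/-- The block 3×3 matrix [[K, D, 0], [Dᵀ, F, 1_N], [0ᵀ, 1_Nᵀ, 0]]. -/
noncomputable def bigMat {nΓ N : ℕ} (K : Matrix (Fin nΓ) (Fin nΓ) ℝ)
    (D : Matrix (Fin nΓ) (Fin N) ℝ) (F : Matrix (Fin N) (Fin N) ℝ) :
    Matrix (Fin nΓ ⊕ (Fin N ⊕ Unit)) (Fin nΓ ⊕ (Fin N ⊕ Unit)) ℝ :=
  Matrix.of fun i j =>
    match i, j with
    | Sum.inl a, Sum.inl b => K a b
    | Sum.inl a, Sum.inr (Sum.inl b) => D a b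
    | Sum.inl _, Sum.inr (Sum.inr _) => 0
    | Sum.inr (Sum.inl a), Sum.inl b => D b a
    | Sum.inr (Sum.inl a), Sum.inr (Sum.inl b) => F a b
    | Sum.inr (Sum.inl _), Sum.inr (Sum.inr _) => 1
    | Sum.inr (Sum.inr _), Sum.inl _ => 0
    | Sum.inr (Sum.inr _), Sum.inr (Sum.inl _) => 1
    | Sum.inr (Sum.inr _), Sum.inr (Sum.inr _) => 0

section Aux

variable {nΓ N : ℕ} (K : Matrix (Fin nΓ) (Fin nΓ) ℝ) (D : Matrix (Fin nΓ) (Fin N) ℝ)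
  (F : Matrix (Fin N) (Fin N) ℝ) (x : Fin nΓ → ℝ) (z₂ : Fin N → ℝ) (z₃ : ℝ)

lemma bigMulVec_inl (a : Fin nΓ) :
    ((bigMat K D F).mulVec (Sum.elim x (Sum.elim z₂ fun _ => z₃))) (Sum.inl a)
      = K.mulVec x a + D.mulVec z₂ a := by
  simp [bigMat, mulVec, dotProduct, Fintype.sum_sum_type]

lemma bigMulVec_inr_inl (b : Fin N) :
    ((bigMat K D F).mulVec (Sum.elim x (Sum.elim z₂ fun _ => z₃))) (Sum.inr (Sum.inl b))
      = Dᵀ.mulVec x b + F.mulVec z₂ b + z₃ := by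
  simp [bigMat, mulVec, dotProduct, Fintype.sum_sum_type, add_assoc]

lemma bigMulVec_inr_inr (u : Unit) :
    ((bigMat K D F).mulVec (Sum.elim x (Sum.elim z₂ fun _ => z₃))) (Sum.inr (Sum.inr u))
      = ∑ i, z₂ i := by
  simp [bigMat, mulVec, dotProduct, Fintype.sum_sum_type]

/-- Characterization of the big generalized eigenvalue equation in terms of the
three block rows, when `lam ≠ 1`. -/
lemma bigEq_iff (G : Matrix (Fin nΓ) (Fin nΓ) ℝ) (lam : ℝ) (hlam : lam ≠ 1) :
    ((bigMat K D F).mulVec (Sum.elim x (Sum.elim z₂ fun _ => z₃)) =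
        lam • (bigMat G D F).mulVec (Sum.elim x (Sum.elim z₂ fun _ => z₃)))
    ↔ (K.mulVec x + D.mulVec z₂ = lam • (G.mulVec x + D.mulVec z₂))
      ∧ (Dᵀ.mulVec x + F.mulVec z₂ + (fun _ => z₃) = 0)
      ∧ (∑ i, z₂ i = 0) := by
  rw [funext_iff]
  constructor
  · intro h
    have h1 : ∀ a : Fin nΓ, K.mulVec x a + D.mulVec z₂ a
        = lam * (G.mulVec x a + D.mulVec z₂ a) := by
      intro a
      have := h (Sum.inl a)
      rwa [bigMulVec_inl, Pi.smul_apply, bigMulVec_inl, smul_eq_mul] at this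
    have h2 : ∀ b : Fin N, Dᵀ.mulVec x b + F.mulVec z₂ b + z₃
        = lam * (Dᵀ.mulVec x b + F.mulVec z₂ b + z₃) := by
      intro b
      have := h (Sum.inr (Sum.inl b))
      rwa [bigMulVec_inr_inl, Pi.smul_apply, bigMulVec_inr_inl, smul_eq_mul] at this
    have h3 : (∑ i, z₂ i) = lam * ∑ i, z₂ i := by
      have := h (Sum.inr (Sum.inr ()))
      rwa [bigMulVec_inr_inr, Pi.smul_apply, bigMulVec_inr_inr, smul_eq_mul] at this
    have hfix : ∀ t : ℝ, t = lam * t → t = 0 := by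
      intro t ht
      have h0 : (1 - lam) * t = 0 := by linarith
      rcases mul_eq_zero.mp h0 with h' | h'
      · exact absurd (by linarith : lam = 1) hlam
      · exact h'
    refine ⟨funext fun a => by simpa using h1 a, funext fun b => ?_, hfix _ h3⟩
    have := hfix _ (h2 b)
    simpa using this
  · rintro ⟨h1, h2, h3⟩ i
    rcases i with a | b | u
    · rw [bigMulVec_inl, Pi.smul_apply, bigMulVec_inl, smul_eq_mul]
      have := congrFun h1 a
      simpa using this
    · rw [bigMulVec_inr_inl, Pi.smul_apply, bigMulVec_inr_inl, smul_eq_mul]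
      have := congrFun h2 b
      simp only [Pi.add_apply, Pi.zero_apply] at this
      have hz : Dᵀ.mulVec x b + F.mulVec z₂ b + z₃ = 0 := this
      rw [hz]; ring
    · rw [bigMulVec_inr_inr, Pi.smul_apply, bigMulVec_inr_inr, smul_eq_mul, h3]; ring

end Aux

/-- If λ ≠ 1 and x ≠ 0 satisfies the reduced problem (K − Q)x = λ(G − Q)x, then there
exist unique z₂ ∈ ℝ^N and z₃ ∈ ℝ such that z = (x, z₂, z₃) satisfies 𝒦z = λ𝒢z;
explicitly z₂ = −Z(ZᵀFZ)⁻¹ZᵀDᵀx and z₃ is the unique scalar with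
z₃·1_N = −(Dᵀx + Fz₂). -/
theorem stmt3 (nΓ N : ℕ) (hN : 2 ≤ N) (K G : Matrix (Fin nΓ) (Fin nΓ) ℝ)
    (D : Matrix (Fin nΓ) (Fin N) ℝ) (F : Matrix (Fin N) (Fin N) ℝ)
    (Z : Matrix (Fin N) (Fin (N - 1)) ℝ)
    (hZli : LinearIndependent ℝ (fun j : Fin (N - 1) => Zᵀ j))
    (hZspan : ∀ x : Fin N → ℝ,
      x ∈ Submodule.span ℝ (Set.range fun j : Fin (N - 1) => Zᵀ j) ↔ ∑ i, x i = 0)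
    (hZFZ : IsUnit (Zᵀ * F * Z))
    (Q : Matrix (Fin nΓ) (Fin nΓ) ℝ) (hQ : Q = D * Z * (Zᵀ * F * Z)⁻¹ * (D * Z)ᵀ)
    (lam : ℝ) (hlam : lam ≠ 1)
    (x : Fin nΓ → ℝ) (hx : x ≠ 0)
    (heig : (K - Q).mulVec x = lam • (G - Q).mulVec x) :
    (∃! p : (Fin N → ℝ) × ℝ,
        (bigMat K D F).mulVec (Sum.elim x (Sum.elim p.1 fun _ => p.2)) =
          lam • (bigMat G D F).mulVec (Sum.elim x (Sum.elim p.1 fun _ => p.2))) ∧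
    (∀ p : (Fin N → ℝ) × ℝ,
        (bigMat K D F).mulVec (Sum.elim x (Sum.elim p.1 fun _ => p.2)) =
          lam • (bigMat G D F).mulVec (Sum.elim x (Sum.elim p.1 fun _ => p.2)) →
        p.1 = -((Z * (Zᵀ * F * Z)⁻¹ * Zᵀ * Dᵀ).mulVec x) ∧
        (p.2 • (fun _ : Fin N => (1 : ℝ))) = -(Dᵀ.mulVec x + F.mulVec p.1)) := by
  have hNpos : (0:ℕ) < N := by omega
  have hNne : (N:ℝ) ≠ 0 := Nat.cast_ne_zero.mpr (by omega)
  have hdet : IsUnit (Zᵀ * F * Z).det := (Matrix.isUnit_iff_isUnit_det _).1 hZFZ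
  set B := (Zᵀ * F * Z)⁻¹ with hB
  -- column sums of Z are zero
  have hZcol : ∀ j, ∑ i, Z i j = 0 := by
    intro j
    have h : (Zᵀ j) ∈ Submodule.span ℝ (Set.range fun j : Fin (N - 1) => Zᵀ j) :=
      Submodule.subset_span ⟨j, rfl⟩
    exact (hZspan (Zᵀ j)).1 h
  -- kernel of Zᵀ consists of the constant vectors
  have hker : ∀ v : Fin N → ℝ, (∀ j, ∑ i, Z i j * v i = 0) → ∃ c : ℝ, v = fun _ => c := by
    intro v hv
    set c : ℝ := (∑ i, v i) / N with hc
    refine ⟨c, ?_⟩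
    set w : Fin N → ℝ := fun i => v i - c with hw
    have hsw : ∑ i, w i = 0 := by
      simp only [hw]
      rw [Finset.sum_sub_distrib, Finset.sum_const, Finset.card_univ, Fintype.card_fin,
        nsmul_eq_mul, hc]
      field_simp
      ring
    obtain ⟨y, hy⟩ := (Submodule.mem_span_range_iff_exists_fun ℝ).mp ((hZspan w).2 hsw)
    have hwy : ∀ i, w i = ∑ j, Z i j * y j := by
      intro i
      have h := congrFun hy i
      simp only [Finset.sum_apply, Pi.smul_apply, transpose_apply, smul_eq_mul] at h
      rw [← h]
      exact Finset.sum_congr rfl fun j _ => mul_comm _ _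
    have hZw : ∀ j, ∑ i, Z i j * w i = 0 := by
      intro j
      have h : ∑ i, Z i j * w i = ∑ i, Z i j * v i - c * ∑ i, Z i j := by
        rw [Finset.mul_sum, ← Finset.sum_sub_distrib]
        refine Finset.sum_congr rfl fun i _ => ?_
        simp only [hw]; ring
      rw [h, hv j, hZcol j]; ring
    have hsq : ∑ i, w i * w i = 0 := by
      calc ∑ i, w i * w i = ∑ i, (∑ j, Z i j * y j) * w i :=
            Finset.sum_congr rfl fun i _ => by rw [← hwy i]
        _ = ∑ j, y j * ∑ i, Z i j * w i := by
            simp_rw [Finset.sum_mul]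
            rw [Finset.sum_comm]
            refine Finset.sum_congr rfl fun j _ => ?_
            rw [Finset.mul_sum]
            refine Finset.sum_congr rfl fun i _ => by ring
        _ = 0 := by simp [hZw]
    have hw0 : ∀ i, w i = 0 := by
      intro i
      have hnn : ∀ i ∈ Finset.univ, (0:ℝ) ≤ w i * w i := fun i _ => mul_self_nonneg _
      have h := (Finset.sum_eq_zero_iff_of_nonneg hnn).mp hsq i (Finset.mem_univ i)
      exact mul_self_eq_zero.mp h
    funext i
    have h := hw0 i
    simp only [hw] at h
    linarith
  -- the distinguished z₂
  set z₂s : Fin N → ℝ := -((Z * B * Zᵀ * Dᵀ).mulVec x) with hz₂s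
  have hsumZmul : ∀ y : Fin (N-1) → ℝ, ∑ i, (Z.mulVec y) i = 0 := by
    intro y
    simp only [mulVec, dotProduct]
    rw [Finset.sum_comm]
    refine Finset.sum_eq_zero fun j _ => ?_
    rw [← Finset.sum_mul, hZcol j, zero_mul]
  have hz₂s' : z₂s = -(Z.mulVec ((B * Zᵀ * Dᵀ).mulVec x)) := by
    rw [hz₂s]
    congr 1
    simp only [mulVec_mulVec, Matrix.mul_assoc]
  have hsum2 : ∑ i, z₂s i = 0 := by
    rw [hz₂s']
    have h := hsumZmul ((B * Zᵀ * Dᵀ).mulVec x)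
    calc ∑ i, (-(Z.mulVec ((B * Zᵀ * Dᵀ).mulVec x))) i
        = -∑ i, (Z.mulVec ((B * Zᵀ * Dᵀ).mulVec x)) i := by simp
      _ = 0 := by rw [h, neg_zero]
  -- D z₂s = -Q x
  have hDz : D.mulVec z₂s = -(Q.mulVec x) := by
    rw [hz₂s, mulVec_neg, mulVec_mulVec, hQ, transpose_mul]
    simp only [Matrix.mul_assoc]
  -- key matrix identity
  have hmat : Zᵀ * F * Z * B * Zᵀ * Dᵀ = Zᵀ * Dᵀ := by
    rw [hB, Matrix.mul_nonsing_inv _ hdet, Matrix.one_mul]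
  -- Zᵀ (Dᵀ x + F z₂s) = 0
  have hZv : ∀ j, ∑ i, Z i j * (Dᵀ.mulVec x + F.mulVec z₂s) i = 0 := by
    have h0 : Zᵀ.mulVec (Dᵀ.mulVec x + F.mulVec z₂s) = 0 := by
      rw [mulVec_add, hz₂s]
      have h1 : Zᵀ.mulVec (F.mulVec (-((Z * B * Zᵀ * Dᵀ).mulVec x)))
          = -((Zᵀ * F * Z * B * Zᵀ * Dᵀ).mulVec x) := by
        simp only [mulVec_neg, mulVec_mulVec, Matrix.mul_assoc]
      rw [h1, hmat]
      rw [mulVec_mulVec]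
      simp
    intro j
    have h := congrFun h0 j
    simp only [mulVec, dotProduct, Pi.zero_apply, transpose_apply] at h
    rw [← h]
  obtain ⟨c, hcv⟩ := hker _ hZv
  set z₃s : ℝ := -c with hz₃s
  have hrow2 : Dᵀ.mulVec x + F.mulVec z₂s + (fun _ => z₃s) = 0 := by
    funext i
    have h := congrFun hcv i
    simp only [Pi.add_apply, Pi.zero_apply]
    simp only [Pi.add_apply] at h
    rw [h, hz₃s]; ring
  -- row 1
  have hrow1 : K.mulVec x + D.mulVec z₂s = lam • (G.mulVec x + D.mulVec z₂s) := by
    have hK : K.mulVec x + D.mulVec z₂s = (K - Q).mulVec x := by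
      rw [sub_mulVec, hDz]; ring_nf
    have hG : G.mulVec x + D.mulVec z₂s = (G - Q).mulVec x := by
      rw [sub_mulVec, hDz]; ring_nf
    rw [hK, hG, heig]
  have hsat : ((bigMat K D F).mulVec (Sum.elim x (Sum.elim z₂s fun _ => z₃s)) =
      lam • (bigMat G D F).mulVec (Sum.elim x (Sum.elim z₂s fun _ => z₃s))) :=
    (bigEq_iff K D F x z₂s z₃s G lam hlam).2 ⟨hrow1, hrow2, hsum2⟩
  -- characterization of any solution
  have hchar : ∀ p : (Fin N → ℝ) × ℝ,
      (bigMat K D F).mulVec (Sum.elim x (Sum.elim p.1 fun _ => p.2)) =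
        lam • (bigMat G D F).mulVec (Sum.elim x (Sum.elim p.1 fun _ => p.2)) →
      p.1 = z₂s ∧ p.2 = z₃s := by
    rintro ⟨z₂, z₃⟩ hp
    obtain ⟨h1, h2, h3⟩ := (bigEq_iff K D F x z₂ z₃ G lam hlam).1 hp
    obtain ⟨y, hy⟩ := (Submodule.mem_span_range_iff_exists_fun ℝ).mp ((hZspan z₂).2 h3)
    have hz₂y : z₂ = Z.mulVec y := by
      funext i
      have h := congrFun hy i
      simp only [Finset.sum_apply, Pi.smul_apply, transpose_apply, smul_eq_mul] at h
      rw [← h]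
      simp only [mulVec, dotProduct]
      exact Finset.sum_congr rfl fun j _ => mul_comm _ _
    have hZ1 : Zᵀ.mulVec (fun _ : Fin N => z₃) = 0 := by
      funext j
      simp only [mulVec, dotProduct, transpose_apply, Pi.zero_apply]
      rw [← Finset.sum_mul, hZcol j, zero_mul]
    have h2' : Zᵀ.mulVec (Dᵀ.mulVec x) + (Zᵀ * F * Z).mulVec y = 0 := by
      have h := congrArg (Zᵀ.mulVec) h2
      rw [mulVec_add, mulVec_add, hZ1, add_zero, hz₂y, mulVec_zero] at h
      rw [← h]
      congr 1
      simp only [mulVec_mulVec, Matrix.mul_assoc]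
    have h4 : B.mulVec ((Zᵀ * F * Z).mulVec y) = -((B * Zᵀ * Dᵀ).mulVec x) := by
      have hBx : (B * Zᵀ * Dᵀ).mulVec x = B.mulVec (Zᵀ.mulVec (Dᵀ.mulVec x)) := by
        simp only [mulVec_mulVec, Matrix.mul_assoc]
      rw [eq_neg_iff_add_eq_zero, hBx, ← mulVec_add, add_comm ((Zᵀ * F * Z).mulVec y), h2',
        mulVec_zero]
    have hy' : y = -((B * Zᵀ * Dᵀ).mulVec x) := by
      rw [mulVec_mulVec, hB, Matrix.nonsing_inv_mul _ hdet, one_mulVec, ← hB] at h4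
      exact h4
    have hz2 : z₂ = z₂s := by
      rw [hz₂y, hy', mulVec_neg, hz₂s]
      congr 1
      simp only [mulVec_mulVec, Matrix.mul_assoc]
    refine ⟨hz2, ?_⟩
    have h2s : Dᵀ.mulVec x + F.mulVec z₂s + (fun _ : Fin N => z₃) = 0 := by
      rw [← hz2]; exact h2
    have h0 := congrFun (h2s.trans hrow2.symm) ⟨0, hNpos⟩
    simp only [Pi.add_apply] at h0
    linarith
  constructor
  · refine ⟨(z₂s, z₃s), hsat, ?_⟩
    rintro ⟨z₂, z₃⟩ hp
    obtain ⟨h1, h2⟩ := hchar (z₂, z₃) hp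
    simp only [Prod.mk.injEq]
    exact ⟨h1, h2⟩
  · intro p hp
    obtain ⟨h1, h2⟩ := hchar p hp
    constructor
    · simp only [h1, hz₂s]
    · funext i
      have h0 := congrFun hrow2 i
      simp only [Pi.add_apply, Pi.zero_apply] at h0
      simp only [Pi.smul_apply, smul_eq_mul, mul_one, Pi.neg_apply, Pi.add_apply, h1, h2]
      linarith
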